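/- Let Y ∈ {0,1} be a binary random variable and X a random vector, and let p(X) = P(Y = 1 | X). Then Y and X are conditionally independent given p(X). -/

import Mathlib

open MeasureTheory Set

/-- Key step: `E[h·Y | σ(p)] = E[h·p | σ(p)]` for σ(X)-measurable integrable `h`. -/
lemma condexp_mul_propensity_key
    {Ω : Type*} [mΩ : MeasurableSpace Ω] (μ : Measure Ω) [IsProbabilityMeasure μ]
    {k : ℕ} (X : Ω → (Fin k → ℝ)) (Y : Ω → ℝ)
    (hX : Measurable X)
    (p : Ω → ℝ) (hp_meas : Measurable p)
    (hp : p =ᵐ[μ] condExp (MeasurableSpace.comap X inferInstance) μ Y)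
    (h : Ω → ℝ) (hh : StronglyMeasurable[MeasurableSpace.comap X inferInstance] h)
    (hhY : Integrable (h * Y) μ) (hY_int : Integrable Y μ)
    (hhp : Integrable (h * p) μ) :
    condExp (MeasurableSpace.comap p inferInstance) μ (h * Y)
      =ᵐ[μ] condExp (MeasurableSpace.comap p inferInstance) μ (h * p) := by
  set mX := MeasurableSpace.comap X inferInstance with hmXdef
  set mp := MeasurableSpace.comap p inferInstance with hmpdef
  have hmX : mX ≤ mΩ := hX.comap_le
  have hmp : mp ≤ mΩ := hp_meas.comap_le
  letI : MeasurableSpace Ω := mΩ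
  set q : Ω → ℝ := condExp mX μ Y with hqdef
  have hq_sm : StronglyMeasurable[mX] q := stronglyMeasurable_condExp
  have hpull : condExp mX μ (h * Y) =ᵐ[μ] h * q :=
    condExp_mul_of_stronglyMeasurable_left hh hhY hY_int
  refine (ae_eq_condExp_of_forall_setIntegral_eq hmp hhY
    (fun s _ _ => integrable_condExp.integrableOn)
    (fun s hs hμs => ?_)
    stronglyMeasurable_condExp.aestronglyMeasurable).symm
  rw [setIntegral_condExp hmp hhp hs]
  obtain ⟨B, hB, rfl⟩ := hs
  have hsets : p ⁻¹' B =ᵐ[μ] q ⁻¹' B := by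
    rw [Filter.eventuallyEq_set]
    filter_upwards [hp] with ω hω
    simp [Set.mem_preimage, hω]
  have hqB : MeasurableSet[mX] (q ⁻¹' B) := hq_sm.measurable hB
  calc ∫ ω in p ⁻¹' B, (h * p) ω ∂μ
      = ∫ ω in q ⁻¹' B, (h * p) ω ∂μ := setIntegral_congr_set hsets
    _ = ∫ ω in q ⁻¹' B, (h * q) ω ∂μ := by
        refine integral_congr_ae (Filter.EventuallyEq.restrict ?_)
        filter_upwards [hp] with ω hω
        simp [Pi.mul_apply, hω]
    _ = ∫ ω in q ⁻¹' B, condExp mX μ (h * Y) ω ∂μ :=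
        integral_congr_ae (Filter.EventuallyEq.restrict hpull.symm)
    _ = ∫ ω in q ⁻¹' B, (h * Y) ω ∂μ := setIntegral_condExp hmX hhY hqB
    _ = ∫ ω in p ⁻¹' B, (h * Y) ω ∂μ := (setIntegral_congr_set hsets).symm

/-- Lemma A.2: if `Y ∈ {0,1}` and `p` is a version of `P(Y = 1 | X)` (i.e. of
`E[Y | σ(X)]`), then `Y` and `X` are conditionally independent given `p`, in the
sense that `E[f(X) g(Y) | p] = E[f(X) | p] · E[g(Y) | p]` a.e. for all bounded
measurable `f`, `g`. -/
theorem cond_indep_given_propensity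
    {Ω : Type*} [mΩ : MeasurableSpace Ω] (μ : Measure Ω) [IsProbabilityMeasure μ]
    {k : ℕ} (X : Ω → (Fin k → ℝ)) (Y : Ω → ℝ)
    (hX : Measurable X) (hY : Measurable Y)
    (hY01 : ∀ ω, Y ω = 0 ∨ Y ω = 1)
    (p : Ω → ℝ) (hp_meas : Measurable p)
    (hp : p =ᵐ[μ] condExp (MeasurableSpace.comap X inferInstance) μ Y) :
    ∀ (f : (Fin k → ℝ) → ℝ) (g : ℝ → ℝ), Measurable f → Measurable g →
      (∃ Mf, ∀ x, |f x| ≤ Mf) → (∃ Mg, ∀ y, |g y| ≤ Mg) →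
      condExp (MeasurableSpace.comap p inferInstance) μ (fun ω => f (X ω) * g (Y ω))
        =ᵐ[μ] fun ω =>
          (condExp (MeasurableSpace.comap p inferInstance) μ (fun ω' => f (X ω')) ω) *
          (condExp (MeasurableSpace.comap p inferInstance) μ (fun ω' => g (Y ω')) ω) := by
  rintro f g hf hg ⟨Mf, hMf⟩ ⟨Mg, hMg⟩
  set mX := MeasurableSpace.comap X inferInstance with hmXdef
  set mp := MeasurableSpace.comap p inferInstance with hmpdef
  have hmX : mX ≤ mΩ := hX.comap_le
  have hmp : mp ≤ mΩ := hp_meas.comap_le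
  letI : MeasurableSpace Ω := mΩ
  set q : Ω → ℝ := condExp mX μ Y with hqdef
  -- boundedness and integrability facts
  have hY1 : ∀ ω, |Y ω| ≤ 1 := by
    intro ω; rcases hY01 ω with h | h <;> simp [h]
  have int_bdd : ∀ (u : Ω → ℝ) (C : ℝ), Measurable u → (∀ ω, |u ω| ≤ C) →
      Integrable u μ := by
    intro u C hu hC
    exact (integrable_const C).mono' hu.aestronglyMeasurable
      (Filter.Eventually.of_forall fun ω => by simpa [Real.norm_eq_abs] using hC ω)
  set F : Ω → ℝ := fun ω => f (X ω) with hFdef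
  set G : Ω → ℝ := fun ω => g (Y ω) with hGdef
  have hF_meas : Measurable F := hf.comp hX
  have hG_meas : Measurable G := hg.comp hY
  have hMf0 : 0 ≤ Mf := le_trans (abs_nonneg _) (hMf 0)
  have hF_int : Integrable F μ := int_bdd F Mf hF_meas fun ω => hMf _
  have hG_int : Integrable G μ := int_bdd G Mg hG_meas fun ω => hMg _
  have hY_int : Integrable Y μ := int_bdd Y 1 hY hY1
  have hFY_int : Integrable (F * Y) μ := by
    refine int_bdd _ Mf (hF_meas.mul hY) fun ω => ?_
    calc |F ω * Y ω| = |F ω| * |Y ω| := abs_mul _ _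
      _ ≤ Mf * 1 := mul_le_mul (hMf _) (hY1 _) (abs_nonneg _) hMf0
      _ = Mf := mul_one _
  have hq_int : Integrable q μ := integrable_condExp
  have hFq_int : Integrable (F * q) μ :=
    hq_int.bdd_mul (c := Mf) hF_meas.aestronglyMeasurable
      (Filter.Eventually.of_forall fun ω => by simpa [Real.norm_eq_abs] using hMf (X ω))
  have hFp_int : Integrable (F * p) μ := by
    refine hFq_int.congr ?_
    filter_upwards [hp] with ω hω
    simp [Pi.mul_apply, hω]
  have hp_int : Integrable p μ := hq_int.congr hp.symm
  have hFG_int : Integrable (fun ω => F ω * G ω) μ := by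
    refine int_bdd _ (Mf * Mg) (hF_meas.mul hG_meas) fun ω => ?_
    rw [abs_mul]
    exact mul_le_mul (hMf _) (hMg _) (abs_nonneg _) hMf0
  -- strong measurability facts
  have hXmX : Measurable[mX] X := measurable_iff_comap_le.mpr le_rfl
  have hF_smX : StronglyMeasurable[mX] F := (hf.comp hXmX).stronglyMeasurable
  have hp_smp : StronglyMeasurable[mp] p :=
    (measurable_iff_comap_le.mpr le_rfl).stronglyMeasurable
  -- key conditional expectation identities
  have key : condExp mp μ (F * Y) =ᵐ[μ] condExp mp μ (F * p) :=
    condexp_mul_propensity_key μ X Y hX p hp_meas hp F hF_smX hFY_int hY_int hFp_int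
  have hpull : condExp mp μ (p * F) =ᵐ[μ] p * condExp mp μ F :=
    condExp_mul_of_stronglyMeasurable_left hp_smp (by rwa [mul_comm]) hF_int
  have key' : condExp mp μ (F * Y) =ᵐ[μ] p * condExp mp μ F := by
    refine key.trans ?_
    rw [mul_comm F p]
    exact hpull
  have keyY : condExp mp μ Y =ᵐ[μ] p := by
    have h1 := condexp_mul_propensity_key μ X Y hX p hp_meas hp 1
      stronglyMeasurable_const (by rwa [one_mul]) hY_int (by rwa [one_mul])
    rw [one_mul, one_mul] at h1
    exact h1.trans
      (Filter.EventuallyEq.of_eq (condExp_of_stronglyMeasurable hmp hp_smp hp_int))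
  -- decompositions using Y ∈ {0,1}
  have hGdecomp : G = (fun _ : Ω => g 0) + (g 1 - g 0) • Y := by
    funext ω
    rcases hY01 ω with h | h <;>
      simp [hGdef, Pi.add_apply, Pi.smul_apply, smul_eq_mul, h]
  have hFGdecomp : (fun ω => F ω * G ω) = (g 0) • F + (g 1 - g 0) • (F * Y) := by
    funext ω
    rcases hY01 ω with h | h <;>
      simp [hGdef, hFdef, Pi.add_apply, Pi.smul_apply, Pi.mul_apply,
        smul_eq_mul, h] <;> ring
  have keyG : condExp mp μ G =ᵐ[μ] fun ω => g 0 + (g 1 - g 0) * p ω := by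
    rw [hGdecomp]
    refine (condExp_add (integrable_const _) (hY_int.smul _) mp).trans ?_
    have h2 := condExp_smul (μ := μ) (m := mp) (g 1 - g 0) Y
    rw [condExp_const hmp]
    filter_upwards [h2, keyY] with ω hω1 hω2
    simp only [Pi.add_apply, Pi.smul_apply, smul_eq_mul] at *
    rw [hω1, hω2]
  have lhs : condExp mp μ (fun ω => F ω * G ω) =ᵐ[μ]
      fun ω => g 0 * condExp mp μ F ω + (g 1 - g 0) * (p ω * condExp mp μ F ω) := by
    rw [hFGdecomp]
    refine (condExp_add (hF_int.smul _) (hFY_int.smul _) mp).trans ?_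
    have h1 := condExp_smul (μ := μ) (m := mp) (g 0) F
    have h2 := condExp_smul (μ := μ) (m := mp) (g 1 - g 0) (F * Y)
    filter_upwards [h1, h2, key'] with ω hω1 hω2 hω3
    simp only [Pi.add_apply, Pi.smul_apply, Pi.mul_apply, smul_eq_mul] at *
    rw [hω1, hω2, hω3]
  -- final assembly
  filter_upwards [lhs, keyG] with ω hω1 hω2
  have hlhs : condExp mp μ (fun ω' => F ω' * G ω') ω =
      g 0 * condExp mp μ F ω + (g 1 - g 0) * (p ω * condExp mp μ F ω) := hω1
  calc condExp mp μ (fun ω' => f (X ω') * g (Y ω')) ω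
      = g 0 * condExp mp μ F ω + (g 1 - g 0) * (p ω * condExp mp μ F ω) := hlhs
    _ = condExp mp μ F ω * (g 0 + (g 1 - g 0) * p ω) := by ring
    _ = condExp mp μ F ω * condExp mp μ G ω := by rw [hω2]
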